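/- For every integer t ≥ 1, no one-way deterministic one-counter automaton (1D1CA) over the alphabet {a,b,c,d} solves the promise problem ONE-NONE(t), i.e., for every 1D1CA M it is not the case that M accepts every string in (ONE·NONE)^t and rejects every string in (NONE·ONE)^t. -/

import Mathlib

/-- Input symbols extended with the left (`cent`) and right (`dollar`) end-markers. -/
inductive TSym (α : Type) : Type
  | cent : TSym α
  | letter : α → TSym α
  | dollar : TSym α

/-- The tape content `¢ w $` for an input word `w`. -/
def tagged {α : Type} (w : List α) : List (TSym α) :=
  TSym.cent :: (w.map TSym.letter ++ [TSym.dollar])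

/-- A one-way deterministic one-counter automaton. -/
structure OneD1CA (α : Type) where
  Q : Type
  [fintypeQ : Fintype Q]
  [decQ : DecidableEq Q]
  q0 : Q
  acc : Set Q
  m : ℕ
  δ : Q → TSym α → Bool → Q × ℤ
  bound : ∀ q σ z, |(δ q σ z).2| ≤ (m : ℤ)

attribute [instance] OneD1CA.fintypeQ OneD1CA.decQ

namespace OneD1CA

variable {α : Type} (M : OneD1CA α)

/-- One computation step on a configuration (state, counter value). -/
def step (p : M.Q × ℤ) (σ : TSym α) : M.Q × ℤ :=
  ((M.δ p.1 σ (decide (p.2 = 0))).1, p.2 + (M.δ p.1 σ (decide (p.2 = 0))).2)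

/-- Configuration reached from the initial configuration after reading a list of tape symbols. -/
def confAfter (l : List (TSym α)) : M.Q × ℤ :=
  l.foldl M.step (M.q0, 0)

/-- The automaton accepts `w` iff the state after reading `¢ w $` is accepting. -/
def accepts (w : List α) : Prop :=
  (M.confAfter (tagged w)).1 ∈ M.acc

/-- The automaton recognizes the language `L` if it accepts exactly the members of `L`. -/
def recognizes (L : Set (List α)) : Prop :=
  ∀ w : List α, M.accepts w ↔ w ∈ L

end OneD1CA

/-- The alphabet `{a, b, c, d}`. -/
inductive ΓN : Type
  | a : ΓN
  | b : ΓN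
  | c : ΓN
  | d : ΓN
deriving DecidableEq

/-- Exactly one of three propositions holds. -/
def exactlyOne (P Q R : Prop) : Prop :=
  (P ∧ ¬Q ∧ ¬R) ∨ (¬P ∧ Q ∧ ¬R) ∨ (¬P ∧ ¬Q ∧ R)

/-- `#_a(u) = #_b(u)`. -/
def eqAB (u : List ΓN) : Prop := u.count ΓN.a = u.count ΓN.b
/-- `#_b(u) = #_c(u)`. -/
def eqBC (u : List ΓN) : Prop := u.count ΓN.b = u.count ΓN.c
/-- `#_c(u) = #_a(u)`. -/
def eqCA (u : List ΓN) : Prop := u.count ΓN.c = u.count ΓN.a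

/-- The language `ONE`: strings `u ++ y` with `u ∈ {a,b,c}*`, `y ∈ {d}*`,
`|y| ≥ |u|`, and exactly one of the three count equalities holding for `u`. -/
def ONE : Language ΓN :=
  {w | ∃ u y : List ΓN, w = u ++ y ∧ (∀ x ∈ u, x ≠ ΓN.d) ∧ (∀ x ∈ y, x = ΓN.d) ∧
    u.length ≤ y.length ∧ exactlyOne (eqAB u) (eqBC u) (eqCA u)}

/-- The language `NONE`: as `ONE`, but none of the three count equalities holds. -/
def NONE : Language ΓN :=
  {w | ∃ u y : List ΓN, w = u ++ y ∧ (∀ x ∈ u, x ≠ ΓN.d) ∧ (∀ x ∈ y, x = ΓN.d) ∧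
    u.length ≤ y.length ∧ ¬ eqAB u ∧ ¬ eqBC u ∧ ¬ eqCA u}

namespace Stmt10

open OneD1CA

variable {M : OneD1CA ΓN}

/-- Run of the machine on a list of plain letters from an arbitrary configuration. -/
def lrun (M : OneD1CA ΓN) (c : M.Q × ℤ) (w : List ΓN) : M.Q × ℤ :=
  w.foldl (fun c γ => M.step c (TSym.letter γ)) c

@[simp] lemma lrun_nil (c : M.Q × ℤ) : lrun M c [] = c := rfl

lemma lrun_append (c : M.Q × ℤ) (u v : List ΓN) :
    lrun M c (u ++ v) = lrun M (lrun M c u) v :=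
  List.foldl_append

lemma lrun_cons (c : M.Q × ℤ) (γ : ΓN) (w : List ΓN) :
    lrun M c (γ :: w) = lrun M (M.step c (TSym.letter γ)) w := rfl

/-- Orbit of a configuration under repeated reading of a single letter. -/
def orb (M : OneD1CA ΓN) (σ : ΓN) (c : M.Q × ℤ) (k : ℕ) : M.Q × ℤ :=
  lrun M c (List.replicate k σ)

@[simp] lemma orb_zero (σ : ΓN) (c : M.Q × ℤ) : orb M σ c 0 = c := rfl

lemma orb_succ' (σ : ΓN) (c : M.Q × ℤ) (k : ℕ) :
    orb M σ c (k + 1) = M.step (orb M σ c k) (TSym.letter σ) := by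
  unfold orb
  rw [List.replicate_succ' (n := k), lrun_append]
  rfl

lemma step_of_ne_zero (c : M.Q × ℤ) (τ : TSym ΓN) (h : c.2 ≠ 0) :
    M.step c τ = ((M.δ c.1 τ false).1, c.2 + (M.δ c.1 τ false).2) := by
  unfold OneD1CA.step
  rw [decide_eq_false h]

/-- Eventual periodicity-with-drift of a single-letter orbit. -/
lemma L1 (σ : ΓN) (c : M.Q × ℤ) :
    ∃ r p Δ, 0 < p ∧ ∀ k, r ≤ k →
      orb M σ c (k + p) = ((orb M σ c k).1, (orb M σ c k).2 + Δ) := by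
  classical
  by_cases hrep : ∃ k1 k2, k1 < k2 ∧ orb M σ c k1 = orb M σ c k2
  · obtain ⟨k1, k2, hlt, heq⟩ := hrep
    refine ⟨k1, k2 - k1, 0, by omega, ?_⟩
    have key : ∀ j, orb M σ c (k1 + j + (k2 - k1)) = orb M σ c (k1 + j) := by
      intro j
      induction j with
      | zero =>
          rw [show k1 + 0 + (k2 - k1) = k2 by omega, show k1 + 0 = k1 by omega]
          exact heq.symm
      | succ n ih =>
          have h1 : k1 + (n + 1) + (k2 - k1) = (k1 + n + (k2 - k1)) + 1 := by omega
          have h2 : k1 + (n + 1) = (k1 + n) + 1 := by omega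
          rw [h1, h2, orb_succ', orb_succ', ih]
    intro k hk
    have := key (k - k1)
    rw [show k1 + (k - k1) = k by omega] at this
    rw [this]
    exact Prod.ext rfl (by simp)
  · push_neg at hrep
    have hinj : Function.Injective (orb M σ c) := by
      intro k1 k2 h
      by_contra hne
      rcases Nat.lt_or_ge k1 k2 with hlt | hge
      · exact hrep k1 k2 hlt h
      · exact hrep k2 k1 (by omega) h.symm
    -- the set of times with zero counter is finite
    have hZfin : {k : ℕ | (orb M σ c k).2 = 0}.Finite := by
      have : Function.Injective
          (fun k : {k : ℕ | (orb M σ c k).2 = 0} => (orb M σ c k.1).1) := by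
        intro k1 k2 h
        apply Subtype.ext
        apply hinj
        have h1 : (orb M σ c k1.1).2 = 0 := k1.2
        have h2 : (orb M σ c k2.1).2 = 0 := k2.2
        exact Prod.ext h (by rw [h1, h2])
      have : Finite {k : ℕ | (orb M σ c k).2 = 0} := Finite.of_injective _ this
      exact Set.toFinite _
    obtain ⟨N, hN⟩ := hZfin.bddAbove
    have hNZ : ∀ k, N + 1 ≤ k → (orb M σ c k).2 ≠ 0 := by
      intro k hk h0
      have := hN (Set.mem_setOf.mpr h0)
      omega
    -- pigeonhole on states
    set sQ := Fintype.card M.Q with hsQ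
    obtain ⟨k1, hk1, k2, hk2, hne, hfeq⟩ :=
      Finset.exists_ne_map_eq_of_card_lt_of_maps_to
        (s := Finset.Icc (N + 1) (N + 1 + sQ)) (t := Finset.univ)
        (by simp [Nat.card_Icc]; omega) (fun k _ => Finset.mem_univ ((orb M σ c k).1))
    simp only [Finset.mem_Icc] at hk1 hk2
    -- wlog k1 < k2
    obtain ⟨a1, a2, ha, haeq, hage⟩ : ∃ a1 a2, a1 < a2 ∧
        (orb M σ c a1).1 = (orb M σ c a2).1 ∧ N + 1 ≤ a1 := by
      rcases Nat.lt_or_ge k1 k2 with h | h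
      · exact ⟨k1, k2, h, hfeq, hk1.1⟩
      · exact ⟨k2, k1, by omega, hfeq.symm, hk2.1⟩
    refine ⟨a1, a2 - a1, (orb M σ c a2).2 - (orb M σ c a1).2, by omega, ?_⟩
    have key : ∀ j, orb M σ c (a1 + j + (a2 - a1)) =
        ((orb M σ c (a1 + j)).1,
          (orb M σ c (a1 + j)).2 + ((orb M σ c a2).2 - (orb M σ c a1).2)) := by
      intro j
      induction j with
      | zero =>
          rw [show a1 + 0 + (a2 - a1) = a2 by omega]
          rw [show a1 + 0 = a1 by omega]
          exact Prod.ext haeq.symm (by ring)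
      | succ n ih =>
          have h1 : a1 + (n + 1) + (a2 - a1) = (a1 + n + (a2 - a1)) + 1 := by omega
          have h2 : a1 + (n + 1) = (a1 + n) + 1 := by omega
          rw [h1, h2, orb_succ', orb_succ', ih]
          have hz1 : (orb M σ c (a1 + n)).2 ≠ 0 := hNZ _ (by omega)
          have hz2 : ((orb M σ c (a1 + n)).1,
              (orb M σ c (a1 + n)).2 + ((orb M σ c a2).2 - (orb M σ c a1).2)).2 ≠ 0 := by
            have := hNZ (a1 + n + (a2 - a1)) (by omega)
            rw [ih] at this
            exact this
          rw [step_of_ne_zero _ _ hz1, step_of_ne_zero _ _ hz2]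
          exact Prod.ext rfl (by dsimp; ring)
    intro k hk
    have := key (k - a1)
    rw [show a1 + (k - a1) = k by omega] at this
    rw [this]

end Stmt10
namespace Stmt10

variable {M : OneD1CA ΓN}

/-- State transition on nonzero counter. -/
def Tmap (M : OneD1CA ΓN) (σ : ΓN) (q : M.Q) : M.Q := (M.δ q (TSym.letter σ) false).1

/-- Counter increment on nonzero counter. -/
def inc (M : OneD1CA ΓN) (σ : ΓN) (q : M.Q) : ℤ := (M.δ q (TSym.letter σ) false).2

/-- Total counter increment over `k` steps in the nonzero regime. -/
def Ssum (M : OneD1CA ΓN) (σ : ΓN) : ℕ → M.Q → ℤ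
  | 0, _ => 0
  | (k+1), q => inc M σ q + Ssum M σ k (Tmap M σ q)

lemma Ssum_bound (σ : ΓN) (k : ℕ) (q : M.Q) : |Ssum M σ k q| ≤ (M.m : ℤ) * k := by
  induction k generalizing q with
  | zero => simp [Ssum]
  | succ n ih =>
      have h1 : |inc M σ q| ≤ (M.m : ℤ) := M.bound q (TSym.letter σ) false
      have h2 : |Ssum M σ (n+1) q| ≤ |inc M σ q| + |Ssum M σ n (Tmap M σ q)| := abs_add_le _ _
      have h3 := ih (Tmap M σ q)
      push_cast
      push_cast at h3
      linarith

lemma Ssum_add (σ : ΓN) (k j : ℕ) (q : M.Q) :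
    Ssum M σ (k + j) q = Ssum M σ k q + Ssum M σ j ((Tmap M σ)^[k] q) := by
  induction k generalizing q with
  | zero => simp [Ssum]
  | succ n ih =>
      have : n + 1 + j = (n + j) + 1 := by omega
      rw [this]
      show inc M σ q + Ssum M σ (n + j) (Tmap M σ q) = _
      rw [ih]
      have : (Tmap M σ)^[n + 1] q = (Tmap M σ)^[n] (Tmap M σ q) :=
        Function.iterate_succ_apply _ _ _
      rw [this]
      show _ = (inc M σ q + Ssum M σ n (Tmap M σ q)) + _
      ring

lemma Ssum_mul_of_fixed (σ : ΓN) (P : ℕ) (q : M.Q) (h : (Tmap M σ)^[P] q = q) (n : ℕ) :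
    Ssum M σ (n * P) q = n * Ssum M σ P q := by
  induction n with
  | zero => simp [Ssum]
  | succ i ih =>
      have : (i + 1) * P = P + i * P := by ring
      rw [this, Ssum_add, h, ih]
      push_cast
      ring

/-- Nonzero-regime run formula. -/
lemma NZ (σ : ΓN) : ∀ (k : ℕ) (q : M.Q) (v : ℤ), (M.m : ℤ) * k < |v| →
    orb M σ (q, v) k = ((Tmap M σ)^[k] q, v + Ssum M σ k q) := by
  intro k
  induction k with
  | zero => intro q v _; simp [Ssum]
  | succ n ih =>
      intro q v hv
      have hm : (0 : ℤ) ≤ (M.m : ℤ) := by positivity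
      have hv0 : v ≠ 0 := by
        intro h; rw [h] at hv; simp at hv
        nlinarith
      have hstep : M.step (q, v) (TSym.letter σ) = (Tmap M σ q, v + inc M σ q) := by
        rw [step_of_ne_zero (M := M) (q, v) _ hv0]; rfl
      have horb : orb M σ (q, v) (n + 1) = orb M σ (Tmap M σ q, v + inc M σ q) n := by
        unfold orb
        rw [List.replicate_succ, lrun_cons, hstep]
      rw [horb, ih]
      · refine Prod.ext ?_ ?_
        · exact (Function.iterate_succ_apply _ _ _).symm
        · show v + inc M σ q + Ssum M σ n (Tmap M σ q) =
            v + (inc M σ q + Ssum M σ n (Tmap M σ q))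
          ring
      · have h1 : |inc M σ q| ≤ (M.m : ℤ) := M.bound q (TSym.letter σ) false
        have h2 : |v| - |inc M σ q| ≤ |v + inc M σ q| := by
          have := abs_sub_abs_le_abs_sub v (-(inc M σ q))
          simpa using this
        push_cast at hv ⊢
        linarith

/-- Iterates of a self-map of a finite type are periodic with period `card!` from `card` on. -/
lemma iter_period {Q : Type} [Fintype Q] [DecidableEq Q] (T : Q → Q) (q : Q) :
    ∀ k, Fintype.card Q ≤ k → ∀ i, T^[k + i * (Fintype.card Q).factorial] q = T^[k] q := by
  classical
  set s := Fintype.card Q with hs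
  obtain ⟨a, ha, b, hb, hne, hfeq⟩ :=
    Finset.exists_ne_map_eq_of_card_lt_of_maps_to
      (s := Finset.range (s + 1)) (t := Finset.univ)
      (by simp; omega) (fun k _ => Finset.mem_univ (T^[k] q))
  simp only [Finset.mem_range] at ha hb
  obtain ⟨a1, a2, hlt, ha2s, heq⟩ : ∃ a1 a2, a1 < a2 ∧ a2 ≤ s ∧ T^[a1] q = T^[a2] q := by
    rcases Nat.lt_or_ge a b with h | h
    · exact ⟨a, b, h, by omega, hfeq⟩
    · exact ⟨b, a, by omega, by omega, hfeq.symm⟩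
  set ℓ := a2 - a1 with hℓ
  have hℓpos : 0 < ℓ := by omega
  have hℓle : ℓ ≤ s := by omega
  have hdvd : ℓ ∣ s.factorial := Nat.dvd_factorial hℓpos hℓle
  have key : ∀ j, T^[a1 + j + ℓ] q = T^[a1 + j] q := by
    intro j
    induction j with
    | zero =>
        rw [show a1 + 0 + ℓ = a2 by omega, show a1 + 0 = a1 by omega]
        exact heq.symm
    | succ n ih =>
        rw [show a1 + (n + 1) + ℓ = (a1 + n + ℓ) + 1 by omega,
          show a1 + (n + 1) = (a1 + n) + 1 by omega,
          Function.iterate_succ_apply', Function.iterate_succ_apply', ih]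
  have key2 : ∀ k, a1 ≤ k → ∀ i, T^[k + i * ℓ] q = T^[k] q := by
    intro k hk i
    induction i with
    | zero => simp
    | succ n ih =>
        have h1 : k + (n + 1) * ℓ = (k + n * ℓ) + ℓ := by ring
        have := key (k + n * ℓ - a1)
        rw [show a1 + (k + n * ℓ - a1) = k + n * ℓ by omega] at this
        rw [h1, this, ih]
  intro k hk i
  obtain ⟨e, he⟩ := hdvd
  rw [he, show k + i * (ℓ * e) = k + (i * e) * ℓ by ring]
  exact key2 k (by omega) (i * e)

/-- The integer compensation identity. -/
lemma INT (A B C : ℤ) (hA : A ≠ 0) :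
    ∃ x y z : ℤ, x * A + y * B + z * C = 0 ∧ y ≠ z := by
  by_cases h1 : B = C
  · exact ⟨0, 1, -1, by rw [h1]; ring, by norm_num⟩
  · by_cases h2 : B + C = 0
    · refine ⟨B, -A, 0, ?_, ?_⟩
      · ring
      · intro h; exact hA (by linarith [neg_eq_zero.mp h])
    · refine ⟨0, -C, B, by ring, ?_⟩
      intro h
      apply h2
      have : B = -C := h.symm ▸ rfl
      omega

end Stmt10
namespace Stmt10

variable {M : OneD1CA ΓN}

/-- A block `a^Ga b^Lb c^Lc d^n`. -/
def block (Ga Lb Lc n : ℕ) : List ΓN :=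
  (List.replicate Ga ΓN.a ++ (List.replicate Lb ΓN.b ++ List.replicate Lc ΓN.c)) ++
    List.replicate n ΓN.d

@[simp] lemma count_repl (x y : ΓN) (n : ℕ) :
    (List.replicate n y).count x = if x = y then n else 0 := by
  by_cases h : x = y
  · rw [if_pos h]; subst h; exact List.count_replicate_self
  · rw [if_neg h]
    exact List.count_eq_zero_of_not_mem (fun hm => h (List.eq_of_mem_replicate hm))

lemma counts_block (Ga Lb Lc : ℕ) :
    (List.replicate Ga ΓN.a ++ (List.replicate Lb ΓN.b ++ List.replicate Lc ΓN.c)).count ΓN.a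
      = Ga ∧
    (List.replicate Ga ΓN.a ++ (List.replicate Lb ΓN.b ++ List.replicate Lc ΓN.c)).count ΓN.b
      = Lb ∧
    (List.replicate Ga ΓN.a ++ (List.replicate Lb ΓN.b ++ List.replicate Lc ΓN.c)).count ΓN.c
      = Lc := by
  refine ⟨?_, ?_, ?_⟩ <;> simp

lemma mem_ONE (Ga Lb Lc n : ℕ) (hlen : Ga + Lb + Lc ≤ n)
    (h : exactlyOne (Ga = Lb) (Lb = Lc) (Lc = Ga)) :
    block Ga Lb Lc n ∈ ONE := by
  obtain ⟨h1, h2, h3⟩ := counts_block Ga Lb Lc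
  refine ⟨_, _, rfl, ?_, ?_, ?_, ?_⟩
  · intro x hx
    simp only [List.mem_append] at hx
    rcases hx with hx | hx | hx <;>
      · have := List.eq_of_mem_replicate hx
        subst this
        intro hc
        exact absurd hc (by simp)
  · intro x hx
    exact List.eq_of_mem_replicate hx
  · simp only [List.length_append, List.length_replicate]
    omega
  · unfold exactlyOne eqAB eqBC eqCA at *
    rw [h1, h2, h3]
    exact h

lemma mem_NONE (Ga Lb Lc n : ℕ) (hlen : Ga + Lb + Lc ≤ n)
    (d1 : Ga ≠ Lb) (d2 : Lb ≠ Lc) (d3 : Lc ≠ Ga) :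
    block Ga Lb Lc n ∈ NONE := by
  obtain ⟨h1, h2, h3⟩ := counts_block Ga Lb Lc
  refine ⟨_, _, rfl, ?_, ?_, ?_, ?_, ?_, ?_⟩
  · intro x hx
    simp only [List.mem_append] at hx
    rcases hx with hx | hx | hx <;>
      · have := List.eq_of_mem_replicate hx
        subst this
        intro hc
        exact absurd hc (by simp)
  · intro x hx
    exact List.eq_of_mem_replicate hx
  · simp only [List.length_append, List.length_replicate]
    omega
  · unfold eqAB; rw [h1, h2]; exact d1
  · unfold eqBC; rw [h2, h3]; exact d2
  · unfold eqCA; rw [h3, h1]; exact d3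

/-- Run of the machine on a block, split into the four letter phases. -/
lemma lrun_block (c : M.Q × ℤ) (Ga Lb Lc n : ℕ) :
    lrun M c (block Ga Lb Lc n) =
      orb M ΓN.d (orb M ΓN.c (orb M ΓN.b (orb M ΓN.a c Ga) Lb) Lc) n := by
  unfold block
  rw [lrun_append, lrun_append, lrun_append]
  rfl

/-- State and counter formula for runs of length `P * s + n * P` in the nonzero regime. -/
lemma run_formula (σ : ΓN) (P : ℕ) (hdvd : (Fintype.card M.Q).factorial ∣ P)
    (hP : 1 ≤ P) (q : M.Q) (n : ℕ) :
    (Tmap M σ)^[P * Fintype.card M.Q + n * P] q = (Tmap M σ)^[P * Fintype.card M.Q] q ∧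
    Ssum M σ (P * Fintype.card M.Q + n * P) q =
      Ssum M σ (P * Fintype.card M.Q) q +
        (n : ℤ) * Ssum M σ P ((Tmap M σ)^[P * Fintype.card M.Q] q) := by
  set s := Fintype.card M.Q with hs
  set base := P * s with hbase
  have hbs : s ≤ base := by
    have : 1 * s ≤ P * s := Nat.mul_le_mul_right s hP
    omega
  obtain ⟨e, he⟩ := hdvd
  have hfix : (Tmap M σ)^[P] ((Tmap M σ)^[base] q) = (Tmap M σ)^[base] q := by
    rw [← Function.iterate_add_apply]
    have := iter_period (Tmap M σ) q base hbs e
    rw [show base + e * s.factorial = P + base by rw [he]; ring] at this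
    exact this
  constructor
  · have := iter_period (Tmap M σ) q base hbs (n * e)
    rw [show base + n * e * s.factorial = base + n * P by
      rw [he]; ring] at this
    exact this
  · rw [Ssum_add]
    congr 1
    exact Ssum_mul_of_fixed σ P _ hfix n

end Stmt10
namespace Stmt10

variable {M : OneD1CA ΓN}

lemma abs_lower (v0 D : ℤ) (hD : D ≠ 0) (N : ℕ) : (N : ℤ) - |v0| ≤ |v0 + (N : ℤ) * D| := by
  have h1 : (1 : ℤ) ≤ |D| := Int.one_le_abs (by omega)
  have h2 : (N : ℤ) ≤ (N : ℤ) * |D| := le_mul_of_one_le_right (by positivity) h1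
  have h3 : |(N : ℤ) * D| = (N : ℤ) * |D| := by
    rw [abs_mul]; congr 1; exact abs_of_nonneg (by positivity)
  have h4 := abs_sub_abs_le_abs_sub ((N : ℤ) * D) (-v0)
  rw [abs_neg, sub_neg_eq_add, h3] at h4
  have : (N : ℤ) * D + v0 = v0 + (N : ℤ) * D := by ring
  rw [this] at h4
  linarith

lemma abs_add_lower (a b : ℤ) : |a| - |b| ≤ |a + b| := by
  have := abs_sub_abs_le_abs_sub a (-b)
  rw [abs_neg, sub_neg_eq_add] at this
  exact this

/-- Choice of the two pump counts with prescribed difference and size. -/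
lemma choose_ix (v0 Δh : ℤ) (hΔh : Δh ≠ 0) (ca : ℤ) (B1 B2 L : ℕ) :
    ∃ ix iz : ℕ, (iz : ℤ) = (ix : ℤ) + ca ∧ L + 1 ≤ ix ∧ L + 1 ≤ iz ∧
      (B1 : ℤ) < |v0 + (ix : ℤ) * Δh| ∧ (B2 : ℤ) < |v0 + (iz : ℤ) * Δh| := by
  refine ⟨B1 + B2 + v0.natAbs + ca.natAbs + L + 1,
    (((B1 + B2 + v0.natAbs + ca.natAbs + L + 1 : ℕ) : ℤ) + ca).toNat, ?_, by omega, ?_, ?_, ?_⟩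
  · rw [Int.toNat_of_nonneg (by omega)]
  · have h := Int.toNat_of_nonneg
      (a := ((B1 + B2 + v0.natAbs + ca.natAbs + L + 1 : ℕ) : ℤ) + ca) (by omega)
    omega
  · have h := abs_lower v0 Δh hΔh (B1 + B2 + v0.natAbs + ca.natAbs + L + 1)
    rw [Int.abs_eq_natAbs v0] at h
    have : (B1 : ℤ) + 1 ≤ ((B1 + B2 + v0.natAbs + ca.natAbs + L + 1 : ℕ) : ℤ) -
        (v0.natAbs : ℤ) := by omega
    linarith
  · have hnn : (0 : ℤ) ≤ ((B1 + B2 + v0.natAbs + ca.natAbs + L + 1 : ℕ) : ℤ) + ca := by omega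
    have h := abs_lower v0 Δh hΔh
      ((((B1 + B2 + v0.natAbs + ca.natAbs + L + 1 : ℕ) : ℤ) + ca).toNat)
    rw [Int.abs_eq_natAbs v0] at h
    have h2 := Int.toNat_of_nonneg hnn
    have : (B2 : ℤ) + 1 ≤
        (((((B1 + B2 + v0.natAbs + ca.natAbs + L + 1 : ℕ) : ℤ) + ca).toNat : ℕ) : ℤ) -
        (v0.natAbs : ℤ) := by omega
    linarith

/-- The key pairing lemma: from any configuration, some ONE-word and some
NONE-word lead to the same configuration. -/
lemma pair (M : OneD1CA ΓN) (c : M.Q × ℤ) :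
    ∃ xw zw : List ΓN, xw ∈ ONE ∧ zw ∈ NONE ∧ lrun M c xw = lrun M c zw := by
  obtain ⟨r, p, Δ, hp, hL1⟩ := L1 ΓN.a c
  have hL1j : ∀ j : ℕ, orb M ΓN.a c (r + j * p) =
      ((orb M ΓN.a c r).1, (orb M ΓN.a c r).2 + (j : ℤ) * Δ) := by
    intro j
    induction j with
    | zero => simp
    | succ n ih =>
        have h := hL1 (r + n * p) (by omega)
        rw [show r + (n + 1) * p = (r + n * p) + p by ring, h, ih]
        refine Prod.ext rfl ?_
        dsimp
        push_cast
        ring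
  by_cases hΔ : Δ = 0
  · -- CASE 1 : recurrent a-orbit.
    subst hΔ
    refine ⟨block (r + 2) (r + 2) 1 ((r + 2 + p) + (r + 2) + 1),
        block (r + 2 + p) (r + 2) 1 ((r + 2 + p) + (r + 2) + 1), ?_, ?_, ?_⟩
    · exact mem_ONE _ _ _ _ (by omega) (Or.inl ⟨rfl, by omega, by omega⟩)
    · exact mem_NONE _ _ _ _ (by omega) (by omega) (by omega) (by omega)
    · rw [lrun_block, lrun_block]
      have h := hL1 (r + 2) (by omega)
      have h2 : orb M ΓN.a c (r + 2 + p) = orb M ΓN.a c (r + 2) := by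
        rw [h]; exact Prod.ext rfl (by simp)
      rw [h2]
  · -- CASE 2 : transient a-orbit.
    obtain ⟨s, hs, hspos⟩ : ∃ s : ℕ, s = Fintype.card M.Q ∧ 0 < s :=
      ⟨_, rfl, Fintype.card_pos_iff.mpr ⟨M.q0⟩⟩
    obtain ⟨P, hPdef, hPpos, hdvd⟩ : ∃ P : ℕ, P = p * s.factorial ∧ 0 < P ∧
        (Fintype.card M.Q).factorial ∣ P := by
      refine ⟨p * s.factorial, rfl, Nat.mul_pos hp s.factorial_pos, ?_⟩
      rw [← hs]
      exact dvd_mul_left _ _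
    obtain ⟨q1, v0, hq1v0⟩ : ∃ q1 v0, orb M ΓN.a c r = (q1, v0) := ⟨_, _, rfl⟩
    obtain ⟨Δh, hΔhdef, hΔh⟩ : ∃ Δh : ℤ, Δh = (s.factorial : ℤ) * Δ ∧ Δh ≠ 0 :=
      ⟨_, rfl, mul_ne_zero (Int.natCast_ne_zero.mpr s.factorial_pos.ne') hΔ⟩
    have hA : ∀ i : ℕ, orb M ΓN.a c (r + i * P) = (q1, v0 + (i : ℤ) * Δh) := by
      intro i
      have h := hL1j (i * s.factorial)
      rw [show r + i * s.factorial * p = r + i * P by rw [hPdef]; ring] at h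
      rw [h, hq1v0]
      refine Prod.ext rfl ?_
      dsimp
      rw [hΔhdef]
      push_cast
      ring
    subst hs
    obtain ⟨q2, hq2⟩ : ∃ q2, q2 = (Tmap M ΓN.b)^[P * Fintype.card M.Q] q1 := ⟨_, rfl⟩
    obtain ⟨q3, hq3⟩ : ∃ q3, q3 = (Tmap M ΓN.c)^[P * Fintype.card M.Q] q2 := ⟨_, rfl⟩
    obtain ⟨DB, hDB⟩ : ∃ x : ℤ, x = Ssum M ΓN.b P q2 := ⟨_, rfl⟩
    obtain ⟨DC, hDC⟩ : ∃ x : ℤ, x = Ssum M ΓN.c P q3 := ⟨_, rfl⟩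
    obtain ⟨SB0, hSB0⟩ : ∃ x : ℤ, x = Ssum M ΓN.b (P * Fintype.card M.Q) q1 := ⟨_, rfl⟩
    obtain ⟨SC0, hSC0⟩ : ∃ x : ℤ, x = Ssum M ΓN.c (P * Fintype.card M.Q) q2 := ⟨_, rfl⟩
    obtain ⟨ca, cb, cc, hsum, hbc⟩ := INT Δh DB DC hΔh
    obtain ⟨E, ny, mz, hny, hmz⟩ : ∃ (E ny mz : ℕ),
        (ny : ℤ) = (E : ℤ) + cb ∧ (mz : ℤ) = (E : ℤ) + cc := by
      refine ⟨ca.natAbs + cb.natAbs + cc.natAbs + 1,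
        (((ca.natAbs + cb.natAbs + cc.natAbs + 1 : ℕ) : ℤ) + cb).toNat,
        (((ca.natAbs + cb.natAbs + cc.natAbs + 1 : ℕ) : ℤ) + cc).toNat, ?_, ?_⟩
      · rw [Int.toNat_of_nonneg (by omega)]
      · rw [Int.toNat_of_nonneg (by omega)]
    have hnymz : ny ≠ mz := by
      intro h
      rw [h] at hny
      apply hbc
      omega
    obtain ⟨Lb0, Lbz, Lcz, hLb0, hLbz, hLcz⟩ : ∃ Lb0 Lbz Lcz : ℕ,
        Lb0 = P * Fintype.card M.Q + E * P ∧ Lbz = P * Fintype.card M.Q + ny * P ∧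
          Lcz = P * Fintype.card M.Q + mz * P :=
      ⟨_, _, _, rfl, rfl, rfl⟩
    have hLzne : Lbz ≠ Lcz := by
      rw [hLbz, hLcz]
      intro hcon
      exact hnymz (Nat.eq_of_mul_eq_mul_right hPpos (Nat.add_left_cancel hcon))
    obtain ⟨ix, iz, hiz, hixL, hizL, hvX, hvZ⟩ :=
      choose_ix v0 Δh hΔh ca (M.m * (Lb0 + Lb0)) (M.m * (Lbz + Lcz)) (Lb0 + Lbz + Lcz)
    -- abbreviations for the two counters
    obtain ⟨vX, hvXdef⟩ : ∃ x : ℤ, x = v0 + (ix : ℤ) * Δh := ⟨_, rfl⟩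
    obtain ⟨vZ, hvZdef⟩ : ∃ x : ℤ, x = v0 + (iz : ℤ) * Δh := ⟨_, rfl⟩
    rw [← hvXdef] at hvX
    rw [← hvZdef] at hvZ
    have hmLb0 : ((M.m * (Lb0 + Lb0) : ℕ) : ℤ) = (M.m : ℤ) * Lb0 + (M.m : ℤ) * Lb0 := by
      push_cast; ring
    have hmLz : ((M.m * (Lbz + Lcz) : ℕ) : ℤ) = (M.m : ℤ) * Lbz + (M.m : ℤ) * Lcz := by
      push_cast; ring
    have hmnn : (0 : ℤ) ≤ (M.m : ℤ) * Lb0 := by positivity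
    have hmnn2 : (0 : ℤ) ≤ (M.m : ℤ) * Lcz := by positivity
    -- X-side run
    have hXa : orb M ΓN.a c (r + ix * P) = (q1, vX) := by rw [hvXdef]; exact hA ix
    have hXbpre : (M.m : ℤ) * (Lb0 : ℕ) < |vX| := by
      rw [hmLb0] at hvX
      linarith
    have hXb : orb M ΓN.b (q1, vX) Lb0 = (q2, vX + (SB0 + (E : ℤ) * DB)) := by
      rw [NZ ΓN.b Lb0 q1 vX hXbpre]
      obtain ⟨hT, hS⟩ := run_formula (M := M) ΓN.b P hdvd hPpos q1 E
      rw [hLb0, hT, hS, ← hq2, ← hSB0, ← hDB]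
    have hXcval : SB0 + (E : ℤ) * DB = Ssum M ΓN.b Lb0 q1 := by
      obtain ⟨hT, hS⟩ := run_formula (M := M) ΓN.b P hdvd hPpos q1 E
      rw [hLb0, hS, ← hq2, ← hSB0, ← hDB]
    have hXcpre : (M.m : ℤ) * (Lb0 : ℕ) < |vX + (SB0 + (E : ℤ) * DB)| := by
      have h1 := abs_add_lower vX (SB0 + (E : ℤ) * DB)
      have hSb2 : |SB0 + (E : ℤ) * DB| ≤ (M.m : ℤ) * Lb0 := by
        rw [hXcval]; exact Ssum_bound ΓN.b Lb0 q1
      rw [hmLb0] at hvX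
      linarith
    have hXc : orb M ΓN.c (q2, vX + (SB0 + (E : ℤ) * DB)) Lb0 =
        (q3, vX + (SB0 + (E : ℤ) * DB) + (SC0 + (E : ℤ) * DC)) := by
      rw [NZ ΓN.c Lb0 q2 _ hXcpre]
      obtain ⟨hT, hS⟩ := run_formula (M := M) ΓN.c P hdvd hPpos q2 E
      rw [hLb0, hT, hS, ← hq3, ← hSC0, ← hDC]
    -- Z-side run
    have hZa : orb M ΓN.a c (r + iz * P) = (q1, vZ) := by rw [hvZdef]; exact hA iz
    have hZbpre : (M.m : ℤ) * (Lbz : ℕ) < |vZ| := by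
      rw [hmLz] at hvZ
      linarith
    have hZb : orb M ΓN.b (q1, vZ) Lbz = (q2, vZ + (SB0 + (ny : ℤ) * DB)) := by
      rw [NZ ΓN.b Lbz q1 vZ hZbpre]
      obtain ⟨hT, hS⟩ := run_formula (M := M) ΓN.b P hdvd hPpos q1 ny
      rw [hLbz, hT, hS, ← hq2, ← hSB0, ← hDB]
    have hZcval : SB0 + (ny : ℤ) * DB = Ssum M ΓN.b Lbz q1 := by
      obtain ⟨hT, hS⟩ := run_formula (M := M) ΓN.b P hdvd hPpos q1 ny
      rw [hLbz, hS, ← hq2, ← hSB0, ← hDB]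
    have hZcpre : (M.m : ℤ) * (Lcz : ℕ) < |vZ + (SB0 + (ny : ℤ) * DB)| := by
      have h1 := abs_add_lower vZ (SB0 + (ny : ℤ) * DB)
      have hSb2 : |SB0 + (ny : ℤ) * DB| ≤ (M.m : ℤ) * Lbz := by
        rw [hZcval]; exact Ssum_bound ΓN.b Lbz q1
      rw [hmLz] at hvZ
      linarith
    have hZc : orb M ΓN.c (q2, vZ + (SB0 + (ny : ℤ) * DB)) Lcz =
        (q3, vZ + (SB0 + (ny : ℤ) * DB) + (SC0 + (mz : ℤ) * DC)) := by
      rw [NZ ΓN.c Lcz q2 _ hZcpre]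
      obtain ⟨hT, hS⟩ := run_formula (M := M) ΓN.c P hdvd hPpos q2 mz
      rw [hLcz, hT, hS, ← hq3, ← hSC0, ← hDC]
    -- the final configurations agree
    have hfinal : vX + (SB0 + (E : ℤ) * DB) + (SC0 + (E : ℤ) * DC) =
        vZ + (SB0 + (ny : ℤ) * DB) + (SC0 + (mz : ℤ) * DC) := by
      rw [hvXdef, hvZdef, hiz, hny, hmz]
      linear_combination -hsum
    -- size facts for memberships
    have hixP : ix ≤ ix * P := Nat.le_mul_of_pos_right ix hPpos
    have hizP : iz ≤ iz * P := Nat.le_mul_of_pos_right iz hPpos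
    -- assemble words
    refine ⟨block (r + ix * P) Lb0 Lb0 (max ((r + ix * P) + Lb0 + Lb0) ((r + iz * P) + Lbz + Lcz)),
        block (r + iz * P) Lbz Lcz (max ((r + ix * P) + Lb0 + Lb0) ((r + iz * P) + Lbz + Lcz)),
        ?_, ?_, ?_⟩
    · exact mem_ONE _ _ _ _ (le_max_left _ _)
        (Or.inr (Or.inl ⟨by omega, rfl, by omega⟩))
    · exact mem_NONE _ _ _ _ (le_max_right _ _) (by omega) hLzne (by omega)
    · rw [lrun_block, lrun_block, hXa, hZa, hXb, hZb, hXc, hZc, hfinal]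

end Stmt10
namespace Stmt10

variable {M : OneD1CA ΓN}

lemma accepts_iff (M : OneD1CA ΓN) (w : List ΓN) :
    M.accepts w ↔
      (M.step (lrun M (M.step (M.q0, 0) TSym.cent) w) TSym.dollar).1 ∈ M.acc := by
  unfold OneD1CA.accepts OneD1CA.confAfter tagged
  rw [List.foldl_cons, List.foldl_append, List.foldl_map]
  rfl

lemma stage (M : OneD1CA ΓN) (c0 : M.Q × ℤ) : ∀ k : ℕ, ∃ wy wz : List ΓN,
    wy ∈ (ONE * NONE) ^ k ∧ wz ∈ (NONE * ONE) ^ k ∧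
    lrun M c0 wy = lrun M c0 wz := by
  intro k
  induction k with
  | zero => exact ⟨[], [], by simp, by simp, rfl⟩
  | succ n ih =>
      obtain ⟨wy, wz, hwy, hwz, heq⟩ := ih
      obtain ⟨x1, z1, hx1, hz1, h1⟩ := pair M (lrun M c0 wy)
      obtain ⟨x2, z2, hx2, hz2, h2⟩ := pair M (lrun M (lrun M c0 wy) x1)
      refine ⟨wy ++ (x1 ++ z2), wz ++ (z1 ++ x2), ?_, ?_, ?_⟩
      · rw [pow_succ]
        exact Language.append_mem_mul hwy ⟨x1, hx1, z2, hz2, rfl⟩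
      · rw [pow_succ]
        exact Language.append_mem_mul hwz ⟨z1, hz1, x2, hx2, rfl⟩
      · rw [lrun_append, lrun_append, lrun_append, lrun_append, ← heq, h1]
        rw [← h1, h2]

end Stmt10

/-- for every `t ≥ 1`, no 1D1CA solves the promise problem `ONE-NONE(t)`. -/
theorem stmt10 (t : ℕ) (ht : 1 ≤ t) (M : OneD1CA ΓN) :
    ¬ ((∀ w ∈ (ONE * NONE) ^ t, M.accepts w) ∧
        (∀ w ∈ (NONE * ONE) ^ t, ¬ M.accepts w)) := by
  rintro ⟨hyes, hno⟩
  obtain ⟨wy, wz, hwy, hwz, heq⟩ := Stmt10.stage M (M.step (M.q0, 0) TSym.cent) t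
  have hy := hyes wy hwy
  have hn := hno wz hwz
  rw [Stmt10.accepts_iff] at hy hn
  rw [heq] at hy
  exact hn hy
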